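/- (Lemma: liveness of the merge of two live sessions.) Let p be a role, T1 and T2 session types such that T1⊕T2 is a session type, and Δ1, Δ2 sessions on the same domain not containing p. If {p:T1} ⊎ Δ1 and {p:T2} ⊎ Δ2 are live sessions and the merge Δ1⋈Δ2 is defined, then {p : T1⊕T2} ⊎ (Δ1⋈Δ2) is a live session. -/

import Mathlib

namespace MultiPartySessions

/-- An interaction: a finite nonempty set of senders, a receiver not among them,
and a message type. -/
structure Interaction (R M : Type*) where
  senders : Finset R
  receiver : R
  msg : M
  senders_nonempty : senders.Nonempty
  receiver_not_mem : receiver ∉ senders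

/-- A trace is a finite list of interactions. -/
abbrev Trace (R M : Type*) := List (Interaction R M)

/-- A language is a set of traces. -/
abbrev Lang (R M : Type*) := Set (Trace R M)

variable {R M V : Type*}

/-- Permutation closure of a language. -/
def perm (L : Lang R M) : Lang R M := {w | ∃ v ∈ L, w.Perm v}

/-- A language of traces is well formed if whenever φ·(π→p:a)·(π'→p':b)·ψ belongs to it,
either p ∈ π' ∪ {p'} or the trace with the two interactions swapped also belongs to it. -/
def WellFormedL (L : Lang R M) : Prop :=
  ∀ (φ ψ : Trace R M) (α β : Interaction R M),
    (φ ++ α :: β :: ψ) ∈ L →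
    (α.receiver ∈ β.senders ∨ α.receiver = β.receiver) ∨ (φ ++ β :: α :: ψ) ∈ L

/-- The smallest well-formed superset of a language. -/
def closure (L : Lang R M) : Lang R M :=
  {w | ∀ K : Lang R M, L ⊆ K → WellFormedL K → w ∈ K}

/-- `IsShuffle v₁ v₂ w` holds iff `w` is an interleaving of `v₁` and `v₂`. -/
inductive IsShuffle {α : Type*} : List α → List α → List α → Prop
  | nil : IsShuffle [] [] []
  | left {a : α} {l₁ l₂ l : List α} : IsShuffle l₁ l₂ l → IsShuffle (a :: l₁) l₂ (a :: l)
  | right {a : α} {l₁ l₂ l : List α} : IsShuffle l₁ l₂ l → IsShuffle l₁ (a :: l₂) (a :: l)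

/-- Shuffle of two languages. -/
def shuffleL (L₁ L₂ : Lang R M) : Lang R M :=
  {w | ∃ v₁ ∈ L₁, ∃ v₂ ∈ L₂, IsShuffle v₁ v₂ w}

/-- Elementwise concatenation of two languages. -/
def catL (L₁ L₂ : Lang R M) : Lang R M :=
  {w | ∃ v₁ ∈ L₁, ∃ v₂ ∈ L₂, w = v₁ ++ v₂}

/-- Kleene star of a language. -/
def starL (L : Lang R M) : Lang R M :=
  {w | ∃ vs : List (Trace R M), w = vs.flatten ∧ ∀ v ∈ vs, v ∈ L}

/-- Global types. -/
inductive GlobalType (R M : Type*) where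
  | skip
  | act (α : Interaction R M)
  | seq (g₁ g₂ : GlobalType R M)
  | par (g₁ g₂ : GlobalType R M)
  | alt (g₁ g₂ : GlobalType R M)
  | star (g : GlobalType R M)

/-- Trace language of a global type. -/
def trG : GlobalType R M → Lang R M
  | .skip => {[]}
  | .act a => {[a]}
  | .seq g₁ g₂ => catL (trG g₁) (trG g₂)
  | .par g₁ g₂ => shuffleL (trG g₁) (trG g₂)
  | .alt g₁ g₂ => trG g₁ ∪ trG g₂
  | .star g => starL (trG g)

/-- Pre-session types. -/
inductive PST (R M V : Type*) where
  | done
  | var (X : V)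
  | out (p : R) (a : M) (T : PST R M V)
  | inp (s : Finset R) (a : M) (T : PST R M V)
  | ichoice (T S : PST R M V)
  | echoice (T S : PST R M V)
  | mu (X : V) (T : PST R M V)

/-- Capture-avoiding simultaneous substitution of recursion variables
(intended usage: the substituted types are closed). -/
def substAll [DecidableEq V] (ρ : V → PST R M V) : PST R M V → PST R M V
  | .done => .done
  | .var X => ρ X
  | .out p a T => .out p a (substAll ρ T)
  | .inp s a T => .inp s a (substAll ρ T)
  | .ichoice T S => .ichoice (substAll ρ T) (substAll ρ S)
  | .echoice T S => .echoice (substAll ρ T) (substAll ρ S)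
  | .mu X T => .mu X (substAll (fun Y => if Y = X then .var X else ρ Y) T)

/-- One-step unfolding of a recursive type `μX.T`. -/
def unfold [DecidableEq V] (X : V) (T : PST R M V) : PST R M V :=
  substAll (fun Y => if Y = X then .mu X T else .var Y) T

/-- Free recursion variables of a pre-session type. -/
def fv : PST R M V → Set V
  | .done => ∅
  | .var X => {X}
  | .out _ _ T => fv T
  | .inp _ _ T => fv T
  | .ichoice T S => fv T ∪ fv S
  | .echoice T S => fv T ∪ fv S
  | .mu X T => fv T \ {X}

/-- `CanOut T p a T'`: `T` offers (modulo internal choice and fold/unfold)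
the top-level output `p!a` with continuation `T'`. -/
inductive CanOut [DecidableEq V] : PST R M V → R → M → PST R M V → Prop
  | out {p : R} {a : M} {T : PST R M V} : CanOut (.out p a T) p a T
  | left {T S T' : PST R M V} {p : R} {a : M} :
      CanOut T p a T' → CanOut (.ichoice T S) p a T'
  | right {T S T' : PST R M V} {p : R} {a : M} :
      CanOut S p a T' → CanOut (.ichoice T S) p a T'
  | mu {X : V} {T T' : PST R M V} {p : R} {a : M} :
      CanOut (unfold X T) p a T' → CanOut (.mu X T) p a T'

/-- `CanIn T s a T'`: `T` offers (modulo external choice and fold/unfold)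
the top-level input `s?a` with continuation `T'`. -/
inductive CanIn [DecidableEq V] : PST R M V → Finset R → M → PST R M V → Prop
  | inp {s : Finset R} {a : M} {T : PST R M V} : CanIn (.inp s a T) s a T
  | left {T S T' : PST R M V} {s : Finset R} {a : M} :
      CanIn T s a T' → CanIn (.echoice T S) s a T'
  | right {T S T' : PST R M V} {s : Finset R} {a : M} :
      CanIn S s a T' → CanIn (.echoice T S) s a T'
  | mu {X : V} {T T' : PST R M V} {s : Finset R} {a : M} :
      CanIn (unfold X T) s a T' → CanIn (.mu X T) s a T'

/-- `T` behaves as an internal choice of outputs with pairwise distinct prefixes,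
with all continuations in `K`. -/
def OutShape [DecidableEq V] (T : PST R M V) (K : Set (PST R M V)) : Prop :=
  (∃ p a T', CanOut T p a T') ∧
  (¬ ∃ s a T', CanIn T s a T') ∧
  (∀ p a T' T'', CanOut T p a T' → CanOut T p a T'' → T' = T'') ∧
  (∀ p a T', CanOut T p a T' → T' ∈ K)

/-- `T` behaves as an external choice of inputs such that `s ⊆ s'` together with equal
messages forces equal branches, with all continuations in `K`. -/
def InShape [DecidableEq V] (T : PST R M V) (K : Set (PST R M V)) : Prop :=
  (∃ s a T', CanIn T s a T') ∧
  (¬ ∃ p a T', CanOut T p a T') ∧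
  (∀ s a T' s' T'', CanIn T s a T' → CanIn T s' a T'' → s ⊆ s' → s = s' ∧ T' = T'') ∧
  (∀ s a T', CanIn T s a T' → T' ∈ K)

/-- Session types: pre-session types that (coinductively) are either `end`, an internal
choice of outputs with pairwise distinct prefixes, or an external choice of inputs
satisfying the separation condition, all of whose continuations are again session types. -/
def IsST [DecidableEq V] (T : PST R M V) : Prop :=
  ∃ K : Set (PST R M V), T ∈ K ∧
    ∀ U ∈ K, U = PST.done ∨ OutShape U K ∨ InShape U K

/-- A buffer: a FIFO queue of message types for each ordered pair (sender, receiver). -/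
abbrev Buffer (R M : Type*) := R → R → List M

/-- A session environment, represented as a total map which is `end` outside its domain. -/
abbrev Session (R M V : Type*) := R → PST R M V

/-- The empty buffer. -/
def emptyBuf : Buffer R M := fun _ _ => []

/-- The session has a finite domain. -/
def FinDom (Δ : Session R M V) : Prop := {p | Δ p ≠ PST.done}.Finite

/-- Every role is successfully terminated. -/
def Ended (Δ : Session R M V) : Prop := ∀ p, Δ p = PST.done

/-- One reduction step of a configuration, labelled by `none` (an output, which enqueues
a message) or by `some` interaction (an input, which dequeues one message of the given
type from each sender in the interaction). -/
inductive Step [DecidableEq R] [DecidableEq V] :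
    Buffer R M → Session R M V → Option (Interaction R M) → Buffer R M → Session R M V → Prop
  | output {B : Buffer R M} {Δ : Session R M V} {p q : R} {a : M} {T' : PST R M V}
      (B' : Buffer R M) :
      CanOut (Δ p) q a T' →
      B' p q = B p q ++ [a] →
      (∀ s r, ¬(s = p ∧ r = q) → B' s r = B s r) →
      Step B Δ none B' (Function.update Δ p T')
  | input {B : Buffer R M} {Δ : Session R M V} {T' : PST R M V}
      (α : Interaction R M) (B' : Buffer R M) :
      CanIn (Δ α.receiver) α.senders α.msg T' →
      (∀ q ∈ α.senders, B q α.receiver = α.msg :: B' q α.receiver) →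
      (∀ s r, ¬(s ∈ α.senders ∧ r = α.receiver) → B' s r = B s r) →
      Step B Δ (some α) B' (Function.update Δ α.receiver T')

/-- Finite reduction sequences; the trace records the labels of the input steps, in order. -/
inductive Steps [DecidableEq R] [DecidableEq V] :
    Buffer R M → Session R M V → Trace R M → Buffer R M → Session R M V → Prop
  | refl {B : Buffer R M} {Δ : Session R M V} : Steps B Δ [] B Δ
  | tau {B B' B'' : Buffer R M} {Δ Δ' Δ'' : Session R M V} {φ : Trace R M} :
      Step B Δ none B' Δ' → Steps B' Δ' φ B'' Δ'' → Steps B Δ φ B'' Δ''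
  | act {B B' B'' : Buffer R M} {Δ Δ' Δ'' : Session R M V} {α : Interaction R M}
      {φ : Trace R M} :
      Step B Δ (some α) B' Δ' → Steps B' Δ' φ B'' Δ'' → Steps B Δ (α :: φ) B'' Δ''

/-- A live session: every reachable configuration can reach a configuration with empty
buffer where every participant has successfully terminated. -/
def Live [DecidableEq R] [DecidableEq V] (Δ : Session R M V) : Prop :=
  ∀ φ B' Δ', Steps emptyBuf Δ φ B' Δ' →
    ∃ ψ Δ'', Steps B' Δ' ψ emptyBuf Δ'' ∧ Ended Δ''

/-- Traces of a session (empty if the session is not live). -/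
def trS [DecidableEq R] [DecidableEq V] (Δ : Session R M V) : Lang R M :=
  {φ | Live Δ ∧ ∃ Δ'', Steps emptyBuf Δ φ emptyBuf Δ'' ∧ Ended Δ''}

/-- The environment transformation performed by projecting a single interaction. -/
def actionUpd [DecidableEq R] (α : Interaction R M) (Δ : Session R M V) : Session R M V :=
  fun r =>
    if r = α.receiver then PST.inp α.senders α.msg (Δ r)
    else if r ∈ α.senders then PST.out α.receiver α.msg (Δ r)
    else Δ r

/-- The semantic projection judgment `Δ ⊢ G : Δ'`. -/
inductive SP [DecidableEq R] [DecidableEq V] :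
    Session R M V → GlobalType R M → Session R M V → Prop
  | skip {Δ : Session R M V} : SP Δ .skip Δ
  | action {Δ : Session R M V} (α : Interaction R M) : SP Δ (.act α) (actionUpd α Δ)
  | seq {Δ Δ' Δ'' : Session R M V} {g₁ g₂ : GlobalType R M} :
      SP Δ g₂ Δ' → SP Δ' g₁ Δ'' → SP Δ (.seq g₁ g₂) Δ''
  | alt {Δ Δ₁ Δ₂ : Session R M V} {g₁ g₂ : GlobalType R M} (p : R) :
      SP Δ g₁ Δ₁ → SP Δ g₂ Δ₂ → (∀ q, q ≠ p → Δ₁ q = Δ₂ q) →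
      SP Δ (.alt g₁ g₂) (Function.update Δ₁ p (PST.ichoice (Δ₁ p) (Δ₂ p)))
  | iter {Δ : Session R M V} {g : GlobalType R M} (p : R) (T₁ T₂ : PST R M V) :
      SP (Function.update Δ p (PST.ichoice T₁ T₂)) g (Function.update Δ p T₁) →
      SP (Function.update Δ p T₂) (.star g) (Function.update Δ p (PST.ichoice T₁ T₂))
  | subsume {Δ Δ' Δ'' : Session R M V} {g g' : GlobalType R M} :
      SP Δ g' Δ' →
      trG g' ⊆ trG g → trG g ⊆ perm (trG g') →
      trS Δ'' ⊆ trS Δ' → trS Δ' ⊆ perm (trS Δ'') →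
      SP Δ g Δ''

/-- The projection of a global type from the initial environment assigning `end`
to every participant. -/
def SProot [DecidableEq R] [DecidableEq V] (g : GlobalType R M) (Δ : Session R M V) : Prop :=
  SP (fun _ => PST.done) g Δ

/-- `OccInp p a T`: an input prefix `p?a` occurs (syntactically) in `T`. -/
inductive OccInp (p : R) (a : M) : PST R M V → Prop
  | here {s : Finset R} {T : PST R M V} : p ∈ s → OccInp p a (.inp s a T)
  | inp {s : Finset R} {b : M} {T : PST R M V} : OccInp p a T → OccInp p a (.inp s b T)
  | out {q : R} {b : M} {T : PST R M V} : OccInp p a T → OccInp p a (.out q b T)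
  | ichoiceL {T S : PST R M V} : OccInp p a T → OccInp p a (.ichoice T S)
  | ichoiceR {T S : PST R M V} : OccInp p a S → OccInp p a (.ichoice T S)
  | echoiceL {T S : PST R M V} : OccInp p a T → OccInp p a (.echoice T S)
  | echoiceR {T S : PST R M V} : OccInp p a S → OccInp p a (.echoice T S)
  | mu {X : V} {T : PST R M V} : OccInp p a T → OccInp p a (.mu X T)

/-- One step of the compatibility relation, relative to a set `K` of types already
assumed compatible with the input `p?a`. -/
def CompatStep [DecidableEq V] (p : R) (a : M) (K : Set (PST R M V)) (T : PST R M V) : Prop :=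
  (¬ OccInp p a T) ∨
  ((∃ q b T', CanOut T q b T') ∧ ∀ q b T', CanOut T q b T' → T' ∈ K) ∨
  ((∃ s b T', CanIn T s b T') ∧
    ∀ s b T', CanIn T s b T' → (p ∈ s ∧ a ≠ b) ∨ (p ∉ s ∧ T' ∈ K))

/-- The input `p?a` is compatible with the session type `T` (greatest fixed point). -/
def Compat [DecidableEq V] (p : R) (a : M) (T : PST R M V) : Prop :=
  ∃ K : Set (PST R M V), T ∈ K ∧ ∀ U ∈ K, CompatStep p a K U

/-- The input `s?a` is compatible with `T` if `p?a` is compatible with `T` for some `p ∈ s`. -/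
def CompatIn [DecidableEq V] (s : Finset R) (a : M) (T : PST R M V) : Prop :=
  ∃ p ∈ s, Compat p a T

/-- Output case of one step of the merge relation. -/
def MergeStepOut [DecidableEq V] (K : Set (PST R M V × PST R M V × PST R M V))
    (T S U : PST R M V) : Prop :=
  (∃ p a T', CanOut T p a T') ∧
  (∀ p a, (∃ T', CanOut T p a T') ↔ (∃ S', CanOut S p a S')) ∧
  (∀ p a, (∃ T', CanOut T p a T') ↔ (∃ U', CanOut U p a U')) ∧
  (∀ p a T' S' U', CanOut T p a T' → CanOut S p a S' → CanOut U p a U' → (T', S', U') ∈ K)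

/-- Input case of one step of the merge relation: `T` and `S` are compatible external
choices and `U` combines the common branches (merged) with the residual branches of
each side. -/
def MergeStepIn [DecidableEq V] (K : Set (PST R M V × PST R M V × PST R M V))
    (T S U : PST R M V) : Prop :=
  (∃ s a T', CanIn T s a T') ∧
  (∃ s a S', CanIn S s a S') ∧
  (∀ s a T', CanIn T s a T' → (∃ S', CanIn S s a S') ∨ CompatIn s a S) ∧
  (∀ s a S', CanIn S s a S' → (∃ T', CanIn T s a T') ∨ CompatIn s a T) ∧
  (∀ s a, (∃ U', CanIn U s a U') ↔ ((∃ T', CanIn T s a T') ∨ (∃ S', CanIn S s a S'))) ∧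
  (∀ s a T' S' U', CanIn T s a T' → CanIn S s a S' → CanIn U s a U' → (T', S', U') ∈ K) ∧
  (∀ s a T' U', CanIn T s a T' → ¬(∃ S', CanIn S s a S') → CanIn U s a U' → U' = T') ∧
  (∀ s a S' U', CanIn S s a S' → ¬(∃ T', CanIn T s a T') → CanIn U s a U' → U' = S')

/-- One step of the merge relation. -/
def MergeStep [DecidableEq V] (K : Set (PST R M V × PST R M V × PST R M V))
    (T S U : PST R M V) : Prop :=
  (T = PST.done ∧ S = PST.done ∧ U = PST.done) ∨
  (∃ X, T = PST.var X ∧ S = PST.var X ∧ U = PST.var X) ∨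
  MergeStepOut K T S U ∨ MergeStepIn K T S U

/-- `MergeST T S U`: `U` is the merge `T ⋈ S` (coinductively, as greatest fixed point). -/
def MergeST [DecidableEq V] (T S U : PST R M V) : Prop :=
  ∃ K : Set (PST R M V × PST R M V × PST R M V), (T, S, U) ∈ K ∧
    ∀ x ∈ K, MergeStep K x.1 x.2.1 x.2.2

/-- The algorithmic projection judgment `Δ ⊢A G : Δ'`. -/
inductive AP [DecidableEq R] [DecidableEq V] :
    Session R M V → GlobalType R M → Session R M V → Prop
  | skip {Δ : Session R M V} : AP Δ .skip Δ
  | action {Δ : Session R M V} (α : Interaction R M) : AP Δ (.act α) (actionUpd α Δ)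
  | seq {Δ Δ' Δ'' : Session R M V} {g₁ g₂ : GlobalType R M} :
      AP Δ g₂ Δ' → AP Δ' g₁ Δ'' → AP Δ (.seq g₁ g₂) Δ''
  | alt {Δ Δ₁ Δ₂ : Session R M V} {g₁ g₂ : GlobalType R M} (p : R) (Δm : Session R M V) :
      AP Δ g₁ Δ₁ → AP Δ g₂ Δ₂ →
      (∀ q, q ≠ p → MergeST (Δ₁ q) (Δ₂ q) (Δm q)) →
      AP Δ (.alt g₁ g₂) (Function.update Δm p (PST.ichoice (Δ₁ p) (Δ₂ p)))
  | iter {Δ : Session R M V} {g : GlobalType R M}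
      (p : R) (I : Finset R) (X : V) (Xv : R → V)
      (T S : PST R M V) (Ti Si Mi : R → PST R M V)
      (hpI : p ∉ I)
      (hinj : ∀ q ∈ I, ∀ q' ∈ I, Xv q = Xv q' → q = q')
      (hXXv : ∀ q ∈ I, X ≠ Xv q)
      (hXT : X ∉ fv T) (hXTi : ∀ q ∈ I, X ∉ fv (Ti q)) (hXΔ : ∀ r, X ∉ fv (Δ r))
      (hXvT : ∀ q ∈ I, Xv q ∉ fv T) (hXvTi : ∀ q ∈ I, ∀ q' ∈ I, Xv q ∉ fv (Ti q'))
      (hXvΔ : ∀ q ∈ I, ∀ r, Xv q ∉ fv (Δ r))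
      (hmerge : ∀ q ∈ I, MergeST (Ti q) (Si q) (Mi q)) :
      AP (fun r => if r = p then PST.var X else if r ∈ I then PST.var (Xv r) else Δ r) g
         (fun r => if r = p then S else if r ∈ I then Si r else Δ r) →
      AP (fun r => if r = p then T else if r ∈ I then Ti r else Δ r) (.star g)
         (fun r => if r = p then PST.mu X (PST.ichoice T S)
                   else if r ∈ I then PST.mu (Xv r) (Mi r) else Δ r)

/-- The algorithmic projection of a global type from the initial environment
assigning `end` to every participant. -/
def AProot [DecidableEq R] [DecidableEq V] (g : GlobalType R M) (Δ : Session R M V) : Prop :=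
  AP (fun _ => PST.done) g Δ

/-- A substitution mapping every recursion variable to a closed session type. -/
def ClosedSTSubst [DecidableEq V] (ρ : V → PST R M V) : Prop :=
  ∀ X, fv (ρ X) = ∅ ∧ IsST (ρ X)

/-- Pointwise application of a substitution to a session environment. -/
def applySub [DecidableEq V] (ρ : V → PST R M V) (Δ : Session R M V) : Session R M V :=
  fun p => substAll ρ (Δ p)

/-- Implementation pre-order: `ipre L' L` means `L' ⊑ L`, i.e. `L ⊆ L' ⊆ perm L`. -/
def ipre (L' L : Lang R M) : Prop := L ⊆ L' ∧ L' ⊆ perm L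

/-- A language is regular if it is accepted by a DFA with finitely many states. -/
def IsRegularL (L : Lang R M) : Prop :=
  ∃ (σ : Type) (_ : Fintype σ) (dfa : DFA (Interaction R M) σ), dfa.accepts = L


/-! ### Auxiliary material for Statement 9 -/

section MergeLiveAux

set_option linter.unusedSectionVars false

variable {R M V : Type*} [DecidableEq R] [DecidableEq V]

/-- A pre-session type cannot simultaneously offer an output and an input. -/
lemma canOut_canIn_false {T : PST R M V} {p : R} {a : M} {T' : PST R M V}
    {s : Finset R} {b : M} {T'' : PST R M V}
    (h1 : CanOut T p a T') (h2 : CanIn T s b T'') : False := by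
  induction h1 generalizing s b T'' with
  | out => cases h2
  | left _ _ => cases h2
  | right _ _ => cases h2
  | mu _ ih => cases h2 with | mu h2 => exact ih h2

lemma occInp_substAll {u : R} {a : M} {ρ : V → PST R M V} {T : PST R M V}
    (h : OccInp u a (substAll ρ T)) : OccInp u a T ∨ ∃ X, OccInp u a (ρ X) := by
  induction T generalizing ρ with
  | done => simp only [substAll] at h; cases h
  | var X => exact Or.inr ⟨X, h⟩
  | out q b T ih =>
    simp only [substAll] at h
    cases h with
    | out h' =>
      rcases ih h' with h'' | h''
      · exact Or.inl (OccInp.out h'')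
      · exact Or.inr h''
  | inp s b T ih =>
    simp only [substAll] at h
    cases h with
    | here hm => exact Or.inl (OccInp.here hm)
    | inp h' =>
      rcases ih h' with h'' | h''
      · exact Or.inl (OccInp.inp h'')
      · exact Or.inr h''
  | ichoice T S ihT ihS =>
    simp only [substAll] at h
    cases h with
    | ichoiceL h' =>
      rcases ihT h' with h'' | h''
      · exact Or.inl (OccInp.ichoiceL h'')
      · exact Or.inr h''
    | ichoiceR h' =>
      rcases ihS h' with h'' | h''
      · exact Or.inl (OccInp.ichoiceR h'')
      · exact Or.inr h''
  | echoice T S ihT ihS =>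
    simp only [substAll] at h
    cases h with
    | echoiceL h' =>
      rcases ihT h' with h'' | h''
      · exact Or.inl (OccInp.echoiceL h'')
      · exact Or.inr h''
    | echoiceR h' =>
      rcases ihS h' with h'' | h''
      · exact Or.inl (OccInp.echoiceR h'')
      · exact Or.inr h''
  | mu X T ih =>
    simp only [substAll] at h
    cases h with
    | mu h' =>
      rcases ih h' with h'' | ⟨Y, hY⟩
      · exact Or.inl (OccInp.mu h'')
      · by_cases hYX : Y = X
        · simp only [hYX, if_pos rfl] at hY
          cases hY
        · simp only [if_neg hYX] at hY
          exact Or.inr ⟨Y, hY⟩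

lemma occInp_unfold {u : R} {a : M} {X : V} {T : PST R M V}
    (h : OccInp u a (unfold X T)) : OccInp u a (PST.mu X T) := by
  rcases occInp_substAll h with h' | ⟨Y, hY⟩
  · exact OccInp.mu h'
  · by_cases hYX : Y = X
    · simpa only [hYX, if_pos rfl, if_true] using hY
    · simp only [if_neg hYX] at hY
      cases hY

lemma occInp_of_canOut {T : PST R M V} {q : R} {b : M} {T' : PST R M V}
    (h : CanOut T q b T') {u : R} {a : M} (ho : OccInp u a T') : OccInp u a T := by
  induction h with
  | out => exact OccInp.out ho
  | left _ ih => exact OccInp.ichoiceL (ih ho)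
  | right _ ih => exact OccInp.ichoiceR (ih ho)
  | mu _ ih => exact occInp_unfold (ih ho)

lemma occInp_of_canIn {T : PST R M V} {s : Finset R} {b : M} {T' : PST R M V}
    (h : CanIn T s b T') {u : R} {a : M} (ho : OccInp u a T') : OccInp u a T := by
  induction h with
  | inp => exact OccInp.inp ho
  | left _ ih => exact OccInp.echoiceL (ih ho)
  | right _ ih => exact OccInp.echoiceR (ih ho)
  | mu _ ih => exact occInp_unfold (ih ho)

lemma occInp_of_canIn_mem {T : PST R M V} {s : Finset R} {a : M} {T' : PST R M V}
    (h : CanIn T s a T') {u : R} (hu : u ∈ s) : OccInp u a T := by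
  induction h with
  | inp => exact OccInp.here hu
  | left _ ih => exact OccInp.echoiceL (ih hu)
  | right _ ih => exact OccInp.echoiceR (ih hu)
  | mu _ ih => exact occInp_unfold (ih hu)

lemma compat_of_not_occ {u : R} {a : M} {T : PST R M V}
    (h : ¬ OccInp u a T) : Compat u a T :=
  ⟨{W | ¬ OccInp u a W}, h, fun _ hW => Or.inl hW⟩

lemma compat_canOut {u : R} {a : M} {T : PST R M V} {q : R} {b : M} {T' : PST R M V}
    (hc : Compat u a T) (h : CanOut T q b T') : Compat u a T' := by
  obtain ⟨K, hm, hcl⟩ := hc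
  rcases hcl _ hm with hno | ⟨_, hall⟩ | ⟨⟨s₀, b₀, W, hin⟩, _⟩
  · exact compat_of_not_occ (fun ho => hno (occInp_of_canOut h ho))
  · exact ⟨K, hall _ _ _ h, hcl⟩
  · exact (canOut_canIn_false h hin).elim

lemma compat_canIn {u : R} {a : M} {T : PST R M V} {s : Finset R} {b : M} {T' : PST R M V}
    (hc : Compat u a T) (h : CanIn T s b T') :
    (u ∈ s ∧ b ≠ a) ∨ (u ∉ s ∧ Compat u a T') := by
  obtain ⟨K, hm, hcl⟩ := hc
  rcases hcl _ hm with hno | ⟨⟨q₀, c₀, W, hout⟩, _⟩ | ⟨_, hall⟩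
  · by_cases hu : u ∈ s
    · refine Or.inl ⟨hu, ?_⟩
      rintro rfl
      exact hno (occInp_of_canIn_mem h hu)
    · exact Or.inr ⟨hu, compat_of_not_occ (fun ho => hno (occInp_of_canIn h ho))⟩
  · exact (canOut_canIn_false hout h).elim
  · rcases hall _ _ _ h with ⟨hu, hne⟩ | ⟨hu, hK⟩
    · exact Or.inl ⟨hu, hne.symm⟩
    · exact Or.inr ⟨hu, K, hK, hcl⟩

/-- An inversion principle for single steps. -/
lemma step_cases {B : Buffer R M} {Δ : Session R M V} {κ : Option (Interaction R M)}
    {B' : Buffer R M} {Δ' : Session R M V} (h : Step B Δ κ B' Δ') :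
    (∃ (r q : R) (b : M) (T' : PST R M V), κ = none ∧ CanOut (Δ r) q b T' ∧
      Δ' = Function.update Δ r T' ∧ B' r q = B r q ++ [b] ∧
      (∀ s t, ¬(s = r ∧ t = q) → B' s t = B s t)) ∨
    (∃ (α : Interaction R M) (T' : PST R M V), κ = some α ∧
      CanIn (Δ α.receiver) α.senders α.msg T' ∧
      Δ' = Function.update Δ α.receiver T' ∧
      (∀ q ∈ α.senders, B q α.receiver = α.msg :: B' q α.receiver) ∧
      (∀ s t, ¬(s ∈ α.senders ∧ t = α.receiver) → B' s t = B s t)) := by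
  cases h with
  | output B' h1 h2 h3 => exact Or.inl ⟨_, _, _, _, rfl, h1, rfl, h2, h3⟩
  | input α B' h1 h2 h3 => exact Or.inr ⟨α, _, rfl, h1, rfl, h2, h3⟩

/-- A configuration containing a message that is compatible with the type of its
receiver is blocked: that message can never be consumed. -/
def Blocked (u q : R) (a : M) (B : Buffer R M) (Δ : Session R M V) : Prop :=
  (∃ w, B u q = a :: w) ∧ Compat u a (Δ q)

lemma blocked_step {u q : R} {a : M} {B : Buffer R M} {Δ : Session R M V}
    {κ : Option (Interaction R M)} {B' : Buffer R M} {Δ' : Session R M V}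
    (hb : Blocked u q a B Δ) (h : Step B Δ κ B' Δ') : Blocked u q a B' Δ' := by
  obtain ⟨⟨w, hw⟩, hcpt⟩ := hb
  rcases step_cases h with ⟨r, v, b, T', -, hco, rfl, hBeq, hBoth⟩ |
      ⟨α, T', -, hci, rfl, hcons, hoth⟩
  · constructor
    · by_cases hc : u = r ∧ q = v
      · obtain ⟨rfl, rfl⟩ := hc
        exact ⟨w ++ [b], by rw [hBeq, hw]; rfl⟩
      · exact ⟨w, by rw [hBoth u q hc, hw]⟩
    · by_cases hq : q = r
      · subst hq
        rw [Function.update_self]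
        exact compat_canOut hcpt hco
      · rwa [Function.update_of_ne hq]
  · by_cases hq : q = α.receiver
    · subst hq
      rcases compat_canIn hcpt hci with ⟨hmem, hne⟩ | ⟨hnmem, hcpt'⟩
      · have h1 := hcons u hmem
        rw [hw] at h1
        injection h1 with h1a _
        exact (hne h1a.symm).elim
      · refine ⟨⟨w, ?_⟩, ?_⟩
        · rw [hoth u α.receiver (fun hc => hnmem hc.1), hw]
        · rw [Function.update_self]; exact hcpt'
    · refine ⟨⟨w, ?_⟩, ?_⟩
      · rw [hoth u q (fun hc => hq hc.2), hw]
      · rwa [Function.update_of_ne hq]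

lemma blocked_steps {u q : R} {a : M} {B : Buffer R M} {Δ : Session R M V}
    {ψ : Trace R M} {B' : Buffer R M} {Δ' : Session R M V}
    (h : Steps B Δ ψ B' Δ') (hb : Blocked u q a B Δ) : Blocked u q a B' Δ' := by
  induction h with
  | refl => exact hb
  | tau h1 _ ih => exact ih (blocked_step hb h1)
  | act h1 _ ih => exact ih (blocked_step hb h1)

lemma live_no_blocked {Sig : Session R M V} (hl : Live Sig) {φ : Trace R M}
    {B : Buffer R M} {Δ : Session R M V} (hr : Steps emptyBuf Sig φ B Δ)
    {u q : R} {a : M} (hb : Blocked u q a B Δ) : False := by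
  obtain ⟨ψ, Δf, hc, -⟩ := hl φ B Δ hr
  obtain ⟨⟨w, hw⟩, -⟩ := blocked_steps hc hb
  simp [emptyBuf] at hw

lemma steps_trans {B₀ : Buffer R M} {Δ₀ : Session R M V} {φ ψ : Trace R M}
    {B B' : Buffer R M} {Δ Δ' : Session R M V}
    (h1 : Steps B₀ Δ₀ φ B Δ) (h2 : Steps B Δ ψ B' Δ') :
    Steps B₀ Δ₀ (φ ++ ψ) B' Δ' := by
  induction h1 with
  | refl => simpa using h2
  | tau h _ ih => exact .tau h (ih h2)
  | act h _ ih => exact .act h (ih h2)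

lemma steps_snoc_tau {B₀ : Buffer R M} {Δ₀ : Session R M V} {φ : Trace R M}
    {B B' : Buffer R M} {Δ Δ' : Session R M V}
    (h : Steps B₀ Δ₀ φ B Δ) (hs : Step B Δ none B' Δ') : Steps B₀ Δ₀ φ B' Δ' := by
  simpa using steps_trans h (.tau hs .refl)

lemma steps_snoc_act {B₀ : Buffer R M} {Δ₀ : Session R M V} {φ : Trace R M}
    {B B' : Buffer R M} {Δ Δ' : Session R M V} {α : Interaction R M}
    (h : Steps B₀ Δ₀ φ B Δ) (hs : Step B Δ (some α) B' Δ') :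
    Steps B₀ Δ₀ (φ ++ [α]) B' Δ' :=
  steps_trans h (.act hs .refl)

lemma mergeST_of_K {K : Set (PST R M V × PST R M V × PST R M V)}
    (hcl : ∀ x ∈ K, MergeStep K x.1 x.2.1 x.2.2) {T S U : PST R M V}
    (h : (T, S, U) ∈ K) : MergeST T S U := ⟨K, h, hcl⟩

lemma merge_done {S U : PST R M V} (h : MergeST PST.done S U) : U = PST.done := by
  obtain ⟨K, hm, hcl⟩ := h
  rcases hcl _ hm with ⟨-, -, hU⟩ | ⟨X, hX, -, -⟩ | ⟨⟨p, a, T', h'⟩, -⟩ | ⟨⟨s, a, T', h'⟩, -⟩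
  · exact hU
  · exact (by cases hX)
  · cases h'
  · cases h'

lemma mergeST_symm {T S U : PST R M V} (h : MergeST T S U) : MergeST S T U := by
  refine ⟨{x | MergeST x.2.1 x.1 x.2.2}, h, ?_⟩
  rintro ⟨S₀, T₀, U₀⟩ hx
  obtain ⟨K, hm, hcl⟩ := hx
  rcases hcl _ hm with ⟨h1, h2, h3⟩ | ⟨X, h1, h2, h3⟩ | hout | hin
  · exact Or.inl ⟨h2, h1, h3⟩
  · exact Or.inr (Or.inl ⟨X, h2, h1, h3⟩)
  · obtain ⟨⟨q, a, T', hT'⟩, o2, o3, o4⟩ := hout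
    obtain ⟨S', hS'⟩ := (o2 q a).mp ⟨T', hT'⟩
    refine Or.inr (Or.inr (Or.inl ⟨⟨q, a, S', hS'⟩, fun q a => (o2 q a).symm,
      fun q a => ((o2 q a).symm).trans (o3 q a), ?_⟩))
    intro q a S' T' U' hS hT hU
    exact (⟨K, o4 q a T' S' U' hT hS hU, hcl⟩ : MergeST T' S' U')
  · obtain ⟨c1, c2, c3, c4, c5, c6, c7, c8⟩ := hin
    refine Or.inr (Or.inr (Or.inr ⟨c2, c1, c4, c3,
      fun s a => (c5 s a).trans (or_comm), ?_, c8, c7⟩))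
    intro s a S' T' U' hS hT hU
    exact (⟨K, c6 s a T' S' U' hT hS hU, hcl⟩ : MergeST T' S' U')

/-- The relation used to lift a completing run of one of the two sessions to the
merged session. -/
def RelL (p : R) (Δ Θ : Session R M V) : Prop :=
  ∀ r, Θ r = Δ r ∨
    (r ≠ p ∧ ∃ S, MergeST (Δ r) S (Θ r)) ∨
    (r = p ∧ (∃ q b T', CanOut (Δ p) q b T') ∧
      ∃ W, Θ p = PST.ichoice (Δ p) W ∨ Θ p = PST.ichoice W (Δ p))

lemma relL_ended {p : R} {Δ Θ : Session R M V} (h : RelL p Δ Θ) (he : Ended Δ) :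
    Ended Θ := by
  intro r
  rcases h r with hc | ⟨-, S, hm⟩ | ⟨rfl, ⟨q, b, T', hco⟩, -⟩
  · rw [hc, he r]
  · rw [he r] at hm
    exact merge_done hm
  · rw [he r] at hco
    cases hco

lemma relL_lift_tau {p : R} {B : Buffer R M} {Δ : Session R M V} {B₁ : Buffer R M}
    {Δ₁ Θ : Session R M V} (hstep : Step B Δ none B₁ Δ₁) (hrel : RelL p Δ Θ) :
    ∃ Θ₁, Step B Θ none B₁ Θ₁ ∧ RelL p Δ₁ Θ₁ := by
  rcases step_cases hstep with ⟨r, q, b, T', -, hco, rfl, hBeq, hBoth⟩ | ⟨α, T', hn, -⟩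
  swap
  · exact (by cases hn)
  rcases hrel r with hc | ⟨hrp, S, hm⟩ | ⟨hrp, -, W, hor⟩
  · refine ⟨Function.update Θ r T', Step.output _ (by rw [hc]; exact hco) hBeq hBoth, ?_⟩
    intro w
    by_cases hw : w = r
    · subst hw
      exact Or.inl (by rw [Function.update_self, Function.update_self])
    · rcases hrel w with hc' | ⟨hwp, S', hm'⟩ | ⟨rfl, hex, W', hor'⟩
      · exact Or.inl (by rw [Function.update_of_ne hw, Function.update_of_ne hw, hc'])
      · exact Or.inr (Or.inl ⟨hwp, S', by
          rw [Function.update_of_ne hw, Function.update_of_ne hw]; exact hm'⟩)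
      · refine Or.inr (Or.inr ⟨rfl, ?_, W', ?_⟩) <;>
          rw [Function.update_of_ne hw] <;>
          [exact hex; (rw [Function.update_of_ne hw]; exact hor')]
  · obtain ⟨K, hmK, hcl⟩ := hm
    rcases hcl _ hmK with ⟨h1, -, -⟩ | ⟨X, h1, -, -⟩ | ⟨o1, o2, o3, o4⟩ |
        ⟨⟨s₀, c₀, W₀, hci₀⟩, -⟩
    · rw [show Δ r = PST.done from h1] at hco; cases hco
    · rw [show Δ r = PST.var X from h1] at hco; cases hco
    · obtain ⟨U', hU⟩ := (o3 q b).mp ⟨T', hco⟩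
      obtain ⟨S', hS⟩ := (o2 q b).mp ⟨T', hco⟩
      refine ⟨Function.update Θ r U', Step.output _ hU hBeq hBoth, ?_⟩
      intro w
      by_cases hw : w = r
      · subst hw
        refine Or.inr (Or.inl ⟨hrp, S', ?_⟩)
        rw [Function.update_self, Function.update_self]
        exact mergeST_of_K hcl (o4 q b T' S' U' hco hS hU)
      · rcases hrel w with hc' | ⟨hwp, S'', hm'⟩ | ⟨rfl, hex, W', hor'⟩
        · exact Or.inl (by rw [Function.update_of_ne hw, Function.update_of_ne hw, hc'])
        · exact Or.inr (Or.inl ⟨hwp, S'', by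
            rw [Function.update_of_ne hw, Function.update_of_ne hw]; exact hm'⟩)
        · refine Or.inr (Or.inr ⟨rfl, ?_, W', ?_⟩) <;>
            rw [Function.update_of_ne hw] <;>
            [exact hex; (rw [Function.update_of_ne hw]; exact hor')]
    · exact (canOut_canIn_false hco hci₀).elim
  · subst hrp
    have hco' : CanOut (Θ r) q b T' := by
      rcases hor with h | h
      · rw [h]; exact CanOut.left hco
      · rw [h]; exact CanOut.right hco
    refine ⟨Function.update Θ r T', Step.output _ hco' hBeq hBoth, ?_⟩
    intro w
    by_cases hw : w = r
    · subst hw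
      exact Or.inl (by rw [Function.update_self, Function.update_self])
    · rcases hrel w with hc' | ⟨hwp, S', hm'⟩ | ⟨h, -⟩
      · exact Or.inl (by rw [Function.update_of_ne hw, Function.update_of_ne hw, hc'])
      · exact Or.inr (Or.inl ⟨hwp, S', by
          rw [Function.update_of_ne hw, Function.update_of_ne hw]; exact hm'⟩)
      · exact (hw h).elim

lemma relL_lift_act {p : R} {B : Buffer R M} {Δ : Session R M V} {α : Interaction R M}
    {B₁ : Buffer R M} {Δ₁ Θ : Session R M V} (hstep : Step B Δ (some α) B₁ Δ₁)
    (hrel : RelL p Δ Θ) :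
    ∃ Θ₁, Step B Θ (some α) B₁ Θ₁ ∧ RelL p Δ₁ Θ₁ := by
  rcases step_cases hstep with ⟨r, q, b, T', hn, -⟩ |
      ⟨α', T', hsome, hci, rfl, hcons, hoth⟩
  · exact (by cases hn)
  have hαα : α = α' := by injection hsome
  subst hαα
  rcases hrel α.receiver with hc | ⟨hrp, S, hm⟩ | ⟨hrp, ⟨q, b, W', hW⟩, -⟩
  · refine ⟨Function.update Θ α.receiver T',
      Step.input α _ (by rw [hc]; exact hci) hcons hoth, ?_⟩
    intro w
    by_cases hw : w = α.receiver
    · subst hw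
      exact Or.inl (by rw [Function.update_self, Function.update_self])
    · rcases hrel w with hc' | ⟨hwp, S', hm'⟩ | ⟨rfl, hex, W', hor'⟩
      · exact Or.inl (by rw [Function.update_of_ne hw, Function.update_of_ne hw, hc'])
      · exact Or.inr (Or.inl ⟨hwp, S', by
          rw [Function.update_of_ne hw, Function.update_of_ne hw]; exact hm'⟩)
      · refine Or.inr (Or.inr ⟨rfl, ?_, W', ?_⟩) <;>
          rw [Function.update_of_ne hw] <;>
          [exact hex; (rw [Function.update_of_ne hw]; exact hor')]
  · obtain ⟨K, hmK, hcl⟩ := hm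
    rcases hcl _ hmK with ⟨h1, -, -⟩ | ⟨X, h1, -, -⟩ |
        ⟨⟨q₀, b₀, W₀, hco₀⟩, -⟩ | ⟨c1, c2, c3, c4, c5, c6, c7, c8⟩
    · rw [show Δ α.receiver = PST.done from h1] at hci; cases hci
    · rw [show Δ α.receiver = PST.var X from h1] at hci; cases hci
    · exact (canOut_canIn_false hco₀ hci).elim
    · obtain ⟨U', hU⟩ := (c5 α.senders α.msg).mpr (Or.inl ⟨T', hci⟩)
      refine ⟨Function.update Θ α.receiver U', Step.input α _ hU hcons hoth, ?_⟩
      intro w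
      by_cases hw : w = α.receiver
      · subst hw
        by_cases hS : ∃ S', CanIn S α.senders α.msg S'
        · obtain ⟨S', hS'⟩ := hS
          refine Or.inr (Or.inl ⟨hrp, S', ?_⟩)
          rw [Function.update_self, Function.update_self]
          exact mergeST_of_K hcl (c6 _ _ T' S' U' hci hS' hU)
        · have hUT : U' = T' := c7 _ _ _ _ hci hS hU
          exact Or.inl (by rw [Function.update_self, Function.update_self, hUT])
      · rcases hrel w with hc' | ⟨hwp, S'', hm'⟩ | ⟨rfl, hex, W', hor'⟩
        · exact Or.inl (by rw [Function.update_of_ne hw, Function.update_of_ne hw, hc'])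
        · exact Or.inr (Or.inl ⟨hwp, S'', by
            rw [Function.update_of_ne hw, Function.update_of_ne hw]; exact hm'⟩)
        · refine Or.inr (Or.inr ⟨rfl, ?_, W', ?_⟩) <;>
            rw [Function.update_of_ne hw] <;>
            [exact hex; (rw [Function.update_of_ne hw]; exact hor')]
  · rw [hrp] at hci
    exact (canOut_canIn_false hW hci).elim

lemma relL_lift {p : R} {B : Buffer R M} {Δ : Session R M V} {ψ : Trace R M}
    {Bf : Buffer R M} {Δf : Session R M V} (h : Steps B Δ ψ Bf Δf) :
    ∀ Θ, RelL p Δ Θ → ∃ ψ' Θf, Steps B Θ ψ' Bf Θf ∧ RelL p Δf Θf := by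
  induction h with
  | refl => exact fun Θ hrel => ⟨[], Θ, .refl, hrel⟩
  | tau h1 _ ih =>
    intro Θ hrel
    obtain ⟨Θ₁, hs, hrel₁⟩ := relL_lift_tau h1 hrel
    obtain ⟨ψ', Θf, hsteps, hrelf⟩ := ih Θ₁ hrel₁
    exact ⟨ψ', Θf, .tau hs hsteps, hrelf⟩
  | act h1 _ ih =>
    intro Θ hrel
    obtain ⟨Θ₁, hs, hrel₁⟩ := relL_lift_act h1 hrel
    obtain ⟨ψ', Θf, hsteps, hrelf⟩ := ih Θ₁ hrel₁
    exact ⟨_, Θf, .act hs hsteps, hrelf⟩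

/-- Reachable configurations of a session. -/
def ReachC (Sig : Session R M V) (B : Buffer R M) (Δ : Session R M V) : Prop :=
  ∃ φ, Steps emptyBuf Sig φ B Δ

lemma reachC_tau {Sig : Session R M V} {B : Buffer R M} {Δ : Session R M V}
    {B' : Buffer R M} {Δ' : Session R M V} (h : ReachC Sig B Δ)
    (hs : Step B Δ none B' Δ') : ReachC Sig B' Δ' := by
  obtain ⟨φ, h⟩ := h; exact ⟨φ, steps_snoc_tau h hs⟩

lemma reachC_act {Sig : Session R M V} {B : Buffer R M} {Δ : Session R M V}
    {B' : Buffer R M} {Δ' : Session R M V} {α : Interaction R M} (h : ReachC Sig B Δ)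
    (hs : Step B Δ (some α) B' Δ') : ReachC Sig B' Δ' := by
  obtain ⟨φ, h⟩ := h; exact ⟨φ ++ [α], steps_snoc_act h hs⟩

/-- The committed phase of the simulation: every role either follows the chosen
session, or is still the merge of the chosen session's type with some other type. -/
def RelB (p : R) (Δ Θ : Session R M V) : Prop :=
  ∀ r, Θ r = Δ r ∨ (r ≠ p ∧ ∃ S, MergeST (Δ r) S (Θ r))

def ModeBd (p : R) (Sig : Session R M V) (B : Buffer R M) (Θ : Session R M V) : Prop :=
  ∃ Δ, ReachC Sig B Δ ∧ RelB p Δ Θ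

/-- The uncommitted phase of the simulation. -/
def ModeA (p : R) (T₁ T₂ : PST R M V) (Sig1 Sig2 : Session R M V)
    (B : Buffer R M) (Θ : Session R M V) : Prop :=
  ∃ Da Db, ReachC Sig1 B Da ∧ ReachC Sig2 B Db ∧
    ∀ r, (Θ r = Da r ∧ Da r = Db r) ∨
         (r ≠ p ∧ MergeST (Da r) (Db r) (Θ r)) ∨
         (r = p ∧ Θ p = PST.ichoice T₁ T₂ ∧ Da p = T₁ ∧ Db p = T₂)

def InvM (p : R) (T₁ T₂ : PST R M V) (Sig1 Sig2 : Session R M V)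
    (B : Buffer R M) (Θ : Session R M V) : Prop :=
  ModeA p T₁ T₂ Sig1 Sig2 B Θ ∨ ModeBd p Sig1 B Θ ∨ ModeBd p Sig2 B Θ

lemma modeBd_step {p : R} {Sig : Session R M V} {B : Buffer R M} {Θ : Session R M V}
    {κ : Option (Interaction R M)} {B' : Buffer R M} {Θ' : Session R M V}
    (hl : Live Sig) (hA : ModeBd p Sig B Θ) (hstep : Step B Θ κ B' Θ') :
    ModeBd p Sig B' Θ' := by
  obtain ⟨Δ, hreach, hrel⟩ := hA
  rcases step_cases hstep with ⟨r, q, b, U', -, hco, rfl, hBeq, hBoth⟩ |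
      ⟨α, U', -, hci, rfl, hcons, hoth⟩
  · rcases hrel r with hc | ⟨hrp, S, hm⟩
    · refine ⟨Function.update Δ r U',
        reachC_tau hreach (Step.output _ (by rw [← hc]; exact hco) hBeq hBoth), ?_⟩
      intro w
      by_cases hw : w = r
      · subst hw; exact Or.inl (by rw [Function.update_self, Function.update_self])
      · rcases hrel w with hc' | ⟨hwp, S', hm'⟩
        · exact Or.inl (by rw [Function.update_of_ne hw, Function.update_of_ne hw, hc'])
        · exact Or.inr ⟨hwp, S', by
            rw [Function.update_of_ne hw, Function.update_of_ne hw]; exact hm'⟩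
    · obtain ⟨K, hmK, hcl⟩ := hm
      rcases hcl _ hmK with ⟨-, -, h3⟩ | ⟨X, -, -, h3⟩ | ⟨o1, o2, o3, o4⟩ |
          ⟨⟨s₀, c₀, W₀, hci₀⟩, -, -, -, c5, -⟩
      · rw [show Θ r = PST.done from h3] at hco; cases hco
      · rw [show Θ r = PST.var X from h3] at hco; cases hco
      · obtain ⟨T', hT'⟩ := (o3 q b).mpr ⟨U', hco⟩
        obtain ⟨S', hS'⟩ := (o2 q b).mp ⟨T', hT'⟩
        refine ⟨Function.update Δ r T',
          reachC_tau hreach (Step.output _ hT' hBeq hBoth), ?_⟩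
        intro w
        by_cases hw : w = r
        · subst hw
          refine Or.inr ⟨hrp, S', ?_⟩
          rw [Function.update_self, Function.update_self]
          exact mergeST_of_K hcl (o4 q b T' S' U' hT' hS' hco)
        · rcases hrel w with hc' | ⟨hwp, S'', hm'⟩
          · exact Or.inl (by rw [Function.update_of_ne hw, Function.update_of_ne hw, hc'])
          · exact Or.inr ⟨hwp, S'', by
              rw [Function.update_of_ne hw, Function.update_of_ne hw]; exact hm'⟩
      · obtain ⟨W₁, hW₁⟩ := (c5 s₀ c₀).mpr (Or.inl ⟨W₀, hci₀⟩)
        exact (canOut_canIn_false hco hW₁).elim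
  · rcases hrel α.receiver with hc | ⟨hrp, S, hm⟩
    · refine ⟨Function.update Δ α.receiver U',
        reachC_act hreach (Step.input α _ (by rw [← hc]; exact hci) hcons hoth), ?_⟩
      intro w
      by_cases hw : w = α.receiver
      · subst hw; exact Or.inl (by rw [Function.update_self, Function.update_self])
      · rcases hrel w with hc' | ⟨hwp, S', hm'⟩
        · exact Or.inl (by rw [Function.update_of_ne hw, Function.update_of_ne hw, hc'])
        · exact Or.inr ⟨hwp, S', by
            rw [Function.update_of_ne hw, Function.update_of_ne hw]; exact hm'⟩
    · obtain ⟨K, hmK, hcl⟩ := hm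
      rcases hcl _ hmK with ⟨-, -, h3⟩ | ⟨X, -, -, h3⟩ |
          ⟨⟨q₀, b₀, W₀, hco₀⟩, -, o3, -⟩ | ⟨c1, c2, c3, c4, c5, c6, c7, c8⟩
      · rw [show Θ α.receiver = PST.done from h3] at hci; cases hci
      · rw [show Θ α.receiver = PST.var X from h3] at hci; cases hci
      · obtain ⟨W₁, hW₁⟩ := (o3 q₀ b₀).mp ⟨W₀, hco₀⟩
        exact (canOut_canIn_false hW₁ hci).elim
      · by_cases hTm : ∃ T'', CanIn (Δ α.receiver) α.senders α.msg T''
        · obtain ⟨T', hT'⟩ := hTm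
          by_cases hSm : ∃ S'', CanIn S α.senders α.msg S''
          · obtain ⟨S', hS'⟩ := hSm
            refine ⟨Function.update Δ α.receiver T',
              reachC_act hreach (Step.input α _ hT' hcons hoth), ?_⟩
            intro w
            by_cases hw : w = α.receiver
            · subst hw
              refine Or.inr ⟨hrp, S', ?_⟩
              rw [Function.update_self, Function.update_self]
              exact mergeST_of_K hcl (c6 _ _ T' S' U' hT' hS' hci)
            · rcases hrel w with hc' | ⟨hwp, S'', hm'⟩
              · exact Or.inl
                  (by rw [Function.update_of_ne hw, Function.update_of_ne hw, hc'])
              · exact Or.inr ⟨hwp, S'', by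
                  rw [Function.update_of_ne hw, Function.update_of_ne hw]; exact hm'⟩
          · have hUT : U' = T' := c7 _ _ _ _ hT' hSm hci
            subst hUT
            refine ⟨Function.update Δ α.receiver U',
              reachC_act hreach (Step.input α _ hT' hcons hoth), ?_⟩
            intro w
            by_cases hw : w = α.receiver
            · subst hw
              exact Or.inl (by rw [Function.update_self, Function.update_self])
            · rcases hrel w with hc' | ⟨hwp, S'', hm'⟩
              · exact Or.inl
                  (by rw [Function.update_of_ne hw, Function.update_of_ne hw, hc'])
              · exact Or.inr ⟨hwp, S'', by
                  rw [Function.update_of_ne hw, Function.update_of_ne hw]; exact hm'⟩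
        · rcases (c5 α.senders α.msg).mp ⟨U', hci⟩ with ⟨T', hT'⟩ | ⟨S', hS'⟩
          · exact (hTm ⟨T', hT'⟩).elim
          · rcases c4 _ _ _ hS' with ⟨T', hT'⟩ | hcomp
            · exact (hTm ⟨T', hT'⟩).elim
            · obtain ⟨u, hu, hcpt⟩ := hcomp
              obtain ⟨φ, hφ⟩ := hreach
              exact (live_no_blocked hl hφ
                ⟨⟨_, hcons u hu⟩, hcpt⟩).elim

lemma modeA_step {p : R} {T₁ T₂ : PST R M V} {Sig1 Sig2 : Session R M V}
    {B : Buffer R M} {Θ : Session R M V} {κ : Option (Interaction R M)}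
    {B' : Buffer R M} {Θ' : Session R M V}
    (hl1 : Live Sig1) (hl2 : Live Sig2)
    (hdet : ∀ (q : R) (b : M) (X Y : PST R M V),
      CanOut (PST.ichoice T₁ T₂) q b X → CanOut (PST.ichoice T₁ T₂) q b Y → X = Y)
    (hA : ModeA p T₁ T₂ Sig1 Sig2 B Θ) (hstep : Step B Θ κ B' Θ') :
    InvM p T₁ T₂ Sig1 Sig2 B' Θ' := by
  obtain ⟨Da, Db, hr1, hr2, hrel⟩ := hA
  rcases step_cases hstep with ⟨r, q, b, U', -, hco, rfl, hBeq, hBoth⟩ |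
      ⟨α, U', -, hci, rfl, hcons, hoth⟩
  · rcases hrel r with ⟨hc1, hc2⟩ | ⟨hrp, hm⟩ | ⟨hrp, hΘp, h1p, h2p⟩
    · -- committed in both sessions
      refine Or.inl ⟨Function.update Da r U', Function.update Db r U',
        reachC_tau hr1 (Step.output _ (by rw [← hc1]; exact hco) hBeq hBoth),
        reachC_tau hr2 (Step.output _ (by rw [← hc2, ← hc1]; exact hco) hBeq hBoth), ?_⟩
      intro w
      by_cases hw : w = r
      · subst hw
        exact Or.inl ⟨by rw [Function.update_self, Function.update_self],
          by rw [Function.update_self, Function.update_self]⟩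
      · rcases hrel w with ⟨hc1', hc2'⟩ | ⟨hwp, hm'⟩ | ⟨rfl, hΘp', h1p', h2p'⟩
        · exact Or.inl ⟨by rw [Function.update_of_ne hw, Function.update_of_ne hw, hc1'],
            by rw [Function.update_of_ne hw, Function.update_of_ne hw, hc2']⟩
        · exact Or.inr (Or.inl ⟨hwp, by
            rw [Function.update_of_ne hw, Function.update_of_ne hw,
              Function.update_of_ne hw]; exact hm'⟩)
        · exact Or.inr (Or.inr ⟨rfl, by rw [Function.update_of_ne hw]; exact hΘp',
            by rw [Function.update_of_ne hw]; exact h1p',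
            by rw [Function.update_of_ne hw]; exact h2p'⟩)
    · -- still merged
      obtain ⟨K, hmK, hcl⟩ := hm
      rcases hcl _ hmK with ⟨-, -, h3⟩ | ⟨X, -, -, h3⟩ | ⟨o1, o2, o3, o4⟩ |
          ⟨⟨s₀, c₀, W₀, hci₀⟩, -, -, -, c5, -⟩
      · rw [show Θ r = PST.done from h3] at hco; cases hco
      · rw [show Θ r = PST.var X from h3] at hco; cases hco
      · obtain ⟨T', hT'⟩ := (o3 q b).mpr ⟨U', hco⟩
        obtain ⟨S', hS'⟩ := (o2 q b).mp ⟨T', hT'⟩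
        refine Or.inl ⟨Function.update Da r T', Function.update Db r S',
          reachC_tau hr1 (Step.output _ hT' hBeq hBoth),
          reachC_tau hr2 (Step.output _ hS' hBeq hBoth), ?_⟩
        intro w
        by_cases hw : w = r
        · subst hw
          refine Or.inr (Or.inl ⟨hrp, ?_⟩)
          rw [Function.update_self, Function.update_self, Function.update_self]
          exact mergeST_of_K hcl (o4 q b T' S' U' hT' hS' hco)
        · rcases hrel w with ⟨hc1', hc2'⟩ | ⟨hwp, hm'⟩ | ⟨rfl, hΘp', h1p', h2p'⟩
          · exact Or.inl
              ⟨by rw [Function.update_of_ne hw, Function.update_of_ne hw, hc1'],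
                by rw [Function.update_of_ne hw, Function.update_of_ne hw, hc2']⟩
          · exact Or.inr (Or.inl ⟨hwp, by
              rw [Function.update_of_ne hw, Function.update_of_ne hw,
                Function.update_of_ne hw]; exact hm'⟩)
          · exact Or.inr (Or.inr ⟨rfl, by rw [Function.update_of_ne hw]; exact hΘp',
              by rw [Function.update_of_ne hw]; exact h1p',
              by rw [Function.update_of_ne hw]; exact h2p'⟩)
      · obtain ⟨W₁, hW₁⟩ := (c5 s₀ c₀).mpr (Or.inl ⟨W₀, hci₀⟩)
        exact (canOut_canIn_false hco hW₁).elim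
    · -- the choice role moves
      subst hrp
      rw [hΘp] at hco
      have commonCase : ∀ W, CanOut T₁ q b U' → CanOut T₂ q b W →
          InvM r T₁ T₂ Sig1 Sig2 B' (Function.update Θ r U') := by
        intro W hL hW
        have hWU : W = U' := hdet q b W U' (CanOut.right hW) (CanOut.left hL)
        subst hWU
        refine Or.inl ⟨Function.update Da r W, Function.update Db r W,
          reachC_tau hr1 (Step.output _ (by rw [h1p]; exact hL) hBeq hBoth),
          reachC_tau hr2 (Step.output _ (by rw [h2p]; exact hW) hBeq hBoth), ?_⟩
        intro w
        by_cases hw : w = r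
        · subst hw
          exact Or.inl ⟨by rw [Function.update_self, Function.update_self],
            by rw [Function.update_self, Function.update_self]⟩
        · rcases hrel w with ⟨hc1', hc2'⟩ | ⟨hwp, hm'⟩ | ⟨rfl, -⟩
          · exact Or.inl
              ⟨by rw [Function.update_of_ne hw, Function.update_of_ne hw, hc1'],
                by rw [Function.update_of_ne hw, Function.update_of_ne hw, hc2']⟩
          · exact Or.inr (Or.inl ⟨hwp, by
              rw [Function.update_of_ne hw, Function.update_of_ne hw,
                Function.update_of_ne hw]; exact hm'⟩)
          · exact (hw rfl).elim
      have oneSided1 : CanOut T₁ q b U' →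
          ModeBd r Sig1 B' (Function.update Θ r U') := by
        intro hL
        refine ⟨Function.update Da r U',
          reachC_tau hr1 (Step.output _ (by rw [h1p]; exact hL) hBeq hBoth), ?_⟩
        intro w
        by_cases hw : w = r
        · subst hw; exact Or.inl (by rw [Function.update_self, Function.update_self])
        · rcases hrel w with ⟨hc1', hc2'⟩ | ⟨hwp, hm'⟩ | ⟨rfl, -⟩
          · exact Or.inl
              (by rw [Function.update_of_ne hw, Function.update_of_ne hw, hc1'])
          · exact Or.inr ⟨hwp, Db w, by
              rw [Function.update_of_ne hw, Function.update_of_ne hw]; exact hm'⟩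
          · exact (hw rfl).elim
      have oneSided2 : CanOut T₂ q b U' →
          ModeBd r Sig2 B' (Function.update Θ r U') := by
        intro hR
        refine ⟨Function.update Db r U',
          reachC_tau hr2 (Step.output _ (by rw [h2p]; exact hR) hBeq hBoth), ?_⟩
        intro w
        by_cases hw : w = r
        · subst hw; exact Or.inl (by rw [Function.update_self, Function.update_self])
        · rcases hrel w with ⟨hc1', hc2'⟩ | ⟨hwp, hm'⟩ | ⟨rfl, -⟩
          · refine Or.inl ?_
            rw [Function.update_of_ne hw, Function.update_of_ne hw]
            exact hc1'.trans hc2'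
          · exact Or.inr ⟨hwp, Da w, by
              rw [Function.update_of_ne hw, Function.update_of_ne hw]
              exact mergeST_symm hm'⟩
          · exact (hw rfl).elim
      cases hco with
      | left hL =>
        by_cases h2 : ∃ W, CanOut T₂ q b W
        · obtain ⟨W, hW⟩ := h2
          exact commonCase W hL hW
        · exact Or.inr (Or.inl (oneSided1 hL))
      | right hR =>
        by_cases h1 : ∃ W, CanOut T₁ q b W
        · obtain ⟨W, hW⟩ := h1
          have hWU : W = U' := hdet q b W U' (CanOut.left hW) (CanOut.right hR)
          subst hWU
          exact commonCase W hW hR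
        · exact Or.inr (Or.inr (oneSided2 hR))
  · rcases hrel α.receiver with ⟨hc1, hc2⟩ | ⟨hrp, hm⟩ | ⟨hrp, hΘp, h1p, h2p⟩
    · refine Or.inl ⟨Function.update Da α.receiver U', Function.update Db α.receiver U',
        reachC_act hr1 (Step.input α _ (by rw [← hc1]; exact hci) hcons hoth),
        reachC_act hr2 (Step.input α _ (by rw [← hc2, ← hc1]; exact hci) hcons hoth), ?_⟩
      intro w
      by_cases hw : w = α.receiver
      · subst hw
        exact Or.inl ⟨by rw [Function.update_self, Function.update_self],
          by rw [Function.update_self, Function.update_self]⟩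
      · rcases hrel w with ⟨hc1', hc2'⟩ | ⟨hwp, hm'⟩ | ⟨rfl, hΘp', h1p', h2p'⟩
        · exact Or.inl ⟨by rw [Function.update_of_ne hw, Function.update_of_ne hw, hc1'],
            by rw [Function.update_of_ne hw, Function.update_of_ne hw, hc2']⟩
        · exact Or.inr (Or.inl ⟨hwp, by
            rw [Function.update_of_ne hw, Function.update_of_ne hw,
              Function.update_of_ne hw]; exact hm'⟩)
        · exact Or.inr (Or.inr ⟨rfl, by rw [Function.update_of_ne hw]; exact hΘp',
            by rw [Function.update_of_ne hw]; exact h1p',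
            by rw [Function.update_of_ne hw]; exact h2p'⟩)
    · obtain ⟨K, hmK, hcl⟩ := hm
      rcases hcl _ hmK with ⟨-, -, h3⟩ | ⟨X, -, -, h3⟩ |
          ⟨⟨q₀, b₀, W₀, hco₀⟩, -, o3, -⟩ | ⟨c1, c2, c3, c4, c5, c6, c7, c8⟩
      · rw [show Θ α.receiver = PST.done from h3] at hci; cases hci
      · rw [show Θ α.receiver = PST.var X from h3] at hci; cases hci
      · obtain ⟨W₁, hW₁⟩ := (o3 q₀ b₀).mp ⟨W₀, hco₀⟩
        exact (canOut_canIn_false hW₁ hci).elim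
      · by_cases hTm : ∃ T'', CanIn (Da α.receiver) α.senders α.msg T''
        · obtain ⟨T', hT'⟩ := hTm
          by_cases hSm : ∃ S'', CanIn (Db α.receiver) α.senders α.msg S''
          · obtain ⟨S', hS'⟩ := hSm
            refine Or.inl ⟨Function.update Da α.receiver T',
              Function.update Db α.receiver S',
              reachC_act hr1 (Step.input α _ hT' hcons hoth),
              reachC_act hr2 (Step.input α _ hS' hcons hoth), ?_⟩
            intro w
            by_cases hw : w = α.receiver
            · subst hw
              refine Or.inr (Or.inl ⟨hrp, ?_⟩)
              rw [Function.update_self, Function.update_self, Function.update_self]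
              exact mergeST_of_K hcl (c6 _ _ T' S' U' hT' hS' hci)
            · rcases hrel w with ⟨hc1', hc2'⟩ | ⟨hwp, hm'⟩ | ⟨rfl, hΘp', h1p', h2p'⟩
              · exact Or.inl
                  ⟨by rw [Function.update_of_ne hw, Function.update_of_ne hw, hc1'],
                    by rw [Function.update_of_ne hw, Function.update_of_ne hw, hc2']⟩
              · exact Or.inr (Or.inl ⟨hwp, by
                  rw [Function.update_of_ne hw, Function.update_of_ne hw,
                    Function.update_of_ne hw]; exact hm'⟩)
              · exact Or.inr (Or.inr ⟨rfl, by rw [Function.update_of_ne hw]; exact hΘp',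
                  by rw [Function.update_of_ne hw]; exact h1p',
                  by rw [Function.update_of_ne hw]; exact h2p'⟩)
          · rcases c3 _ _ _ hT' with hS | hcomp
            · exact (hSm hS).elim
            · obtain ⟨u, hu, hcpt⟩ := hcomp
              obtain ⟨φ, hφ⟩ := hr2
              exact (live_no_blocked hl2 hφ ⟨⟨_, hcons u hu⟩, hcpt⟩).elim
        · rcases (c5 α.senders α.msg).mp ⟨U', hci⟩ with ⟨T', hT'⟩ | ⟨S', hS'⟩
          · exact (hTm ⟨T', hT'⟩).elim
          · rcases c4 _ _ _ hS' with ⟨T', hT'⟩ | hcomp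
            · exact (hTm ⟨T', hT'⟩).elim
            · obtain ⟨u, hu, hcpt⟩ := hcomp
              obtain ⟨φ, hφ⟩ := hr1
              exact (live_no_blocked hl1 hφ ⟨⟨_, hcons u hu⟩, hcpt⟩).elim
    · rw [hrp] at hci
      rw [hΘp] at hci
      cases hci

lemma invM_step {p : R} {T₁ T₂ : PST R M V} {Sig1 Sig2 : Session R M V}
    {B : Buffer R M} {Θ : Session R M V} {κ : Option (Interaction R M)}
    {B' : Buffer R M} {Θ' : Session R M V}
    (hl1 : Live Sig1) (hl2 : Live Sig2)
    (hdet : ∀ (q : R) (b : M) (X Y : PST R M V),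
      CanOut (PST.ichoice T₁ T₂) q b X → CanOut (PST.ichoice T₁ T₂) q b Y → X = Y)
    (hA : InvM p T₁ T₂ Sig1 Sig2 B Θ) (hstep : Step B Θ κ B' Θ') :
    InvM p T₁ T₂ Sig1 Sig2 B' Θ' := by
  rcases hA with hA | hB1 | hB2
  · exact modeA_step hl1 hl2 hdet hA hstep
  · exact Or.inr (Or.inl (modeBd_step hl1 hB1 hstep))
  · exact Or.inr (Or.inr (modeBd_step hl2 hB2 hstep))

lemma invM_steps {p : R} {T₁ T₂ : PST R M V} {Sig1 Sig2 : Session R M V}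
    {B : Buffer R M} {Θ : Session R M V} {φ : Trace R M}
    {B' : Buffer R M} {Θ' : Session R M V}
    (hl1 : Live Sig1) (hl2 : Live Sig2)
    (hdet : ∀ (q : R) (b : M) (X Y : PST R M V),
      CanOut (PST.ichoice T₁ T₂) q b X → CanOut (PST.ichoice T₁ T₂) q b Y → X = Y)
    (hsteps : Steps B Θ φ B' Θ') (hA : InvM p T₁ T₂ Sig1 Sig2 B Θ) :
    InvM p T₁ T₂ Sig1 Sig2 B' Θ' := by
  induction hsteps with
  | refl => exact hA
  | tau h1 _ ih => exact ih (invM_step hl1 hl2 hdet hA h1)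
  | act h1 _ ih => exact ih (invM_step hl1 hl2 hdet hA h1)

lemma invM_completion {p : R} {T₁ T₂ : PST R M V} {Sig1 Sig2 : Session R M V}
    {B : Buffer R M} {Θ : Session R M V}
    (hl1 : Live Sig1) (hl2 : Live Sig2)
    (hex : ∃ q b T', CanOut (PST.ichoice T₁ T₂) q b T')
    (hInv : InvM p T₁ T₂ Sig1 Sig2 B Θ) :
    ∃ ψ Θf, Steps B Θ ψ emptyBuf Θf ∧ Ended Θf := by
  rcases hInv with ⟨Da, Db, ⟨φ1, h1⟩, ⟨φ2, h2⟩, hrel⟩ | ⟨Δ, ⟨φ, hφ⟩, hrel⟩ |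
      ⟨Δ, ⟨φ, hφ⟩, hrel⟩
  · obtain ⟨q, b, T0, hco⟩ := hex
    cases hco with
    | left hL =>
      obtain ⟨ψ, Δf, hc, hend⟩ := hl1 φ1 B Da h1
      have hrelL : RelL p Da Θ := by
        intro r
        rcases hrel r with ⟨hc1', -⟩ | ⟨hwp, hm⟩ | ⟨rfl, hΘp, h1p, h2p⟩
        · exact Or.inl hc1'
        · exact Or.inr (Or.inl ⟨hwp, Db r, hm⟩)
        · exact Or.inr (Or.inr ⟨rfl, ⟨q, b, T0, by rw [h1p]; exact hL⟩, T₂,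
            Or.inl (by rw [h1p]; exact hΘp)⟩)
      obtain ⟨ψ', Θf, hsteps, hrelf⟩ := relL_lift hc Θ hrelL
      exact ⟨ψ', Θf, hsteps, relL_ended hrelf hend⟩
    | right hR =>
      obtain ⟨ψ, Δf, hc, hend⟩ := hl2 φ2 B Db h2
      have hrelL : RelL p Db Θ := by
        intro r
        rcases hrel r with ⟨hc1', hc2'⟩ | ⟨hwp, hm⟩ | ⟨rfl, hΘp, h1p, h2p⟩
        · exact Or.inl (hc1'.trans hc2')
        · exact Or.inr (Or.inl ⟨hwp, Da r, mergeST_symm hm⟩)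
        · exact Or.inr (Or.inr ⟨rfl, ⟨q, b, T0, by rw [h2p]; exact hR⟩, T₁,
            Or.inr (by rw [h2p]; exact hΘp)⟩)
      obtain ⟨ψ', Θf, hsteps, hrelf⟩ := relL_lift hc Θ hrelL
      exact ⟨ψ', Θf, hsteps, relL_ended hrelf hend⟩
  · obtain ⟨ψ, Δf, hc, hend⟩ := hl1 φ B Δ hφ
    have hrelL : RelL p Δ Θ := by
      intro r
      rcases hrel r with hc' | ⟨hwp, S, hm⟩
      · exact Or.inl hc'
      · exact Or.inr (Or.inl ⟨hwp, S, hm⟩)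
    obtain ⟨ψ', Θf, hsteps, hrelf⟩ := relL_lift hc Θ hrelL
    exact ⟨ψ', Θf, hsteps, relL_ended hrelf hend⟩
  · obtain ⟨ψ, Δf, hc, hend⟩ := hl2 φ B Δ hφ
    have hrelL : RelL p Δ Θ := by
      intro r
      rcases hrel r with hc' | ⟨hwp, S, hm⟩
      · exact Or.inl hc'
      · exact Or.inr (Or.inl ⟨hwp, S, hm⟩)
    obtain ⟨ψ', Θf, hsteps, hrelf⟩ := relL_lift hc Θ hrelL
    exact ⟨ψ', Θf, hsteps, relL_ended hrelf hend⟩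

end MergeLiveAux

/-- liveness of the merge of two live sessions:
if `{p:T₁} ⊎ Δ₁` and `{p:T₂} ⊎ Δ₂` are live and `Δ₁ ⋈ Δ₂` is defined (with result `Δm`),
then `{p : T₁ ⊕ T₂} ⊎ (Δ₁ ⋈ Δ₂)` is live. -/
theorem merge_of_live_sessions_is_live
    {R M V : Type} [DecidableEq R] [DecidableEq V]
    (p : R) (T₁ T₂ : PST R M V) (Δ₁ Δ₂ Δm : Session R M V)
    (hT₁ : IsST T₁) (hT₂ : IsST T₂) (hT : IsST (PST.ichoice T₁ T₂))
    (hst₁ : ∀ q, IsST (Δ₁ q)) (hfin₁ : FinDom Δ₁) (hp₁ : Δ₁ p = PST.done)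
    (hst₂ : ∀ q, IsST (Δ₂ q)) (hfin₂ : FinDom Δ₂) (hp₂ : Δ₂ p = PST.done)
    (hdom : ∀ q, Δ₁ q = PST.done ↔ Δ₂ q = PST.done)
    (hlive₁ : Live (Function.update Δ₁ p T₁))
    (hlive₂ : Live (Function.update Δ₂ p T₂))
    (hmerge : ∀ q, q ≠ p → MergeST (Δ₁ q) (Δ₂ q) (Δm q)) :
    Live (Function.update Δm p (PST.ichoice T₁ T₂)) := by
  obtain ⟨K, hmem, hcl⟩ := hT
  rcases hcl _ hmem with hdone | ⟨hex, -, hdet4, -⟩ | ⟨⟨s, a, T', hci⟩, -⟩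
  · exact absurd hdone (by simp)
  · intro φ B' Θ' hsteps
    have hdet : ∀ (q : R) (b : M) (X Y : PST R M V),
        CanOut (PST.ichoice T₁ T₂) q b X → CanOut (PST.ichoice T₁ T₂) q b Y → X = Y :=
      fun q b X Y h1 h2 => hdet4 q b X Y h1 h2
    have hinit : InvM p T₁ T₂ (Function.update Δ₁ p T₁) (Function.update Δ₂ p T₂)
        emptyBuf (Function.update Δm p (PST.ichoice T₁ T₂)) := by
      refine Or.inl ⟨Function.update Δ₁ p T₁, Function.update Δ₂ p T₂,
        ⟨[], .refl⟩, ⟨[], .refl⟩, ?_⟩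
      intro r
      by_cases hr : r = p
      · subst hr
        exact Or.inr (Or.inr ⟨rfl, Function.update_self _ _ _,
          Function.update_self _ _ _, Function.update_self _ _ _⟩)
      · refine Or.inr (Or.inl ⟨hr, ?_⟩)
        rw [Function.update_of_ne hr, Function.update_of_ne hr,
          Function.update_of_ne hr]
        exact hmerge r hr
    have hInv := invM_steps hlive₁ hlive₂ hdet hsteps hinit
    exact invM_completion hlive₁ hlive₂ hex hInv
  · cases hci

end MultiPartySessions
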